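/- arXiv:2411.01430 — 3 statements merged into one kernel-verified Lean document; each statement's English description precedes it below -/
import Mathlib

section
/- Let M and N be rectangle persistence modules with underlying rectangles (a₁,b₁)×(a₂,b₂) and (c₁,d₁)×(c₂,d₂). Then the interleaving distance satisfies d_I(M,N) ≤ max{ min_i (b_i−a_i)/2 , min_i (d_i−c_i)/2 }. -/
open Classical

noncomputable section

/-- A point of the parameter space `ℝⁿ`. -/
abbrev Pt (n : ℕ) := Fin n → ℝ

/-- Shift of a point by the diagonal vector `(ε, …, ε)`. -/
def shiftPt {n : ℕ} (u : Pt n) (ε : ℝ) : Pt n := fun i => u i + ε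

lemma shiftPt_mono {n : ℕ} {u v : Pt n} (ε : ℝ) (h : u ≤ v) :
    shiftPt u ε ≤ shiftPt v ε := fun i => add_le_add (h i) le_rfl

lemma le_shiftPt {n : ℕ} (u : Pt n) {ε : ℝ} (hε : 0 ≤ ε) : u ≤ shiftPt u ε :=
  fun i => le_add_of_nonneg_right hε

/-- An `n`-parameter persistence module over the field `k`. -/
structure PersMod (k : Type) [Field k] (n : ℕ) where
  obj : Pt n → Type
  [acg : ∀ u, AddCommGroup (obj u)]
  [mod : ∀ u, Module k (obj u)]
  map : ∀ {u v : Pt n}, u ≤ v → (obj u →ₗ[k] obj v)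
  map_id : ∀ u : Pt n, map (le_refl u) = LinearMap.id
  map_comp : ∀ {u v w : Pt n} (h1 : u ≤ v) (h2 : v ≤ w),
    (map h2).comp (map h1) = map (h1.trans h2)

attribute [instance] PersMod.acg PersMod.mod

variable {k : Type} [Field k] {n : ℕ}

/-- A morphism of persistence modules. -/
structure PersHom (M N : PersMod k n) where
  app : ∀ u, M.obj u →ₗ[k] N.obj u
  natural : ∀ {u v : Pt n} (h : u ≤ v),
    (app v).comp (M.map h) = (N.map h).comp (app u)

/-- A morphism is trivial when every component is the zero map. -/
def PersHom.Trivial {M N : PersMod k n} (f : PersHom M N) : Prop := ∀ u, f.app u = 0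

/-- The `ε`-shift of a persistence module. -/
def PersMod.shift (M : PersMod k n) (ε : ℝ) : PersMod k n where
  obj u := M.obj (shiftPt u ε)
  map h := M.map (shiftPt_mono ε h)
  map_id u := M.map_id _
  map_comp h1 h2 := M.map_comp _ _

/-- `(f, g)` is an `ε`-interleaving pair between `M` and `N`. -/
def IsInterleavingPair (M N : PersMod k n) (ε : ℝ) (hε : 0 ≤ ε)
    (f : PersHom M (N.shift ε)) (g : PersHom N (M.shift ε)) : Prop :=
  (∀ u : Pt n, (g.app (shiftPt u ε)).comp (f.app u) =
      M.map ((le_shiftPt u hε).trans (le_shiftPt _ hε))) ∧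
  (∀ u : Pt n, (f.app (shiftPt u ε)).comp (g.app u) =
      N.map ((le_shiftPt u hε).trans (le_shiftPt _ hε)))

/-- `M` and `N` are `ε`-interleaved. -/
def Interleaved (M N : PersMod k n) (ε : ℝ) : Prop :=
  ∃ (hε : 0 ≤ ε) (f : PersHom M (N.shift ε)) (g : PersHom N (M.shift ε)),
    IsInterleavingPair M N ε hε f g

/-- The interleaving distance, with value in the extended reals. -/
def interleavingDist (M N : PersMod k n) : EReal :=
  sInf {x : EReal | ∃ ε : ℝ, Interleaved M N ε ∧ x = (ε : EReal)}

/-- `M` is `ε`-trivial : all transition maps `M_u → M_{u+(ε,…,ε)}` vanish. -/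
def EpsTrivial (M : PersMod k n) (ε : ℝ) : Prop :=
  ∀ (u : Pt n) (h : u ≤ shiftPt u ε), M.map h = 0

/-- The zero persistence module. -/
def ZeroMod (k : Type) [Field k] (n : ℕ) : PersMod k n where
  obj _ := PUnit
  map _ := 0
  map_id _ := by apply LinearMap.ext; intro x; exact Subsingleton.elim _ _
  map_comp _ _ := by apply LinearMap.ext; intro x; exact Subsingleton.elim _ _

/-- The space at `u` of the interval module on `I` : all of `k` if `u ∈ I`, `0` otherwise. -/
def segSpace (k : Type) [Field k] {n : ℕ} (I : Set (Pt n)) (u : Pt n) : Submodule k k where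
  carrier := {x | u ∉ I → x = 0}
  add_mem' := by intro x y hx hy h; simp only [Set.mem_setOf_eq] at *; rw [hx h, hy h, add_zero]
  zero_mem' := fun _ => rfl
  smul_mem' := by intro c x hx h; simp only [Set.mem_setOf_eq] at *; rw [hx h, smul_zero]

/-- The interval persistence module on an order-convex set `I` : `k` on `I` with identity
internal transition maps, `0` elsewhere. -/
def IntervalMod (k : Type) [Field k] {n : ℕ} (I : Set (Pt n)) (hI : I.OrdConnected) :
    PersMod k n where
  obj u := segSpace k I u
  map {u v} h :=
    { toFun := fun x => ⟨if v ∈ I then (x : k) else 0, by intro hv; simp [hv]⟩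
      map_add' := by intro x y; apply Subtype.ext; by_cases hv : v ∈ I <;> simp [hv]
      map_smul' := by intro c x; apply Subtype.ext; by_cases hv : v ∈ I <;> simp [hv] }
  map_id u := by
    apply LinearMap.ext; intro x
    apply Subtype.ext
    by_cases hu : u ∈ I
    · simp [hu]
    · simp [hu, x.2 hu]
  map_comp {u v w} h1 h2 := by
    apply LinearMap.ext; intro x
    apply Subtype.ext
    by_cases hw : w ∈ I
    · by_cases hv : v ∈ I
      · simp [hw, hv]
      · by_cases hu : u ∈ I
        · exact absurd (hI.out hu hw ⟨h1, h2⟩) hv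
        · simp [hw, hv, x.2 hu]
    · simp [hw]

/-- The open box `∏ᵢ (aᵢ, bᵢ)` with extended-real endpoints. -/
def box {n : ℕ} (a b : Fin n → EReal) : Set (Pt n) :=
  {u | ∀ i, a i < (u i : EReal) ∧ (u i : EReal) < b i}

lemma box_ordConnected {n : ℕ} (a b : Fin n → EReal) : (box a b).OrdConnected := by
  constructor
  intro u hu w hw v hv i
  exact ⟨lt_of_lt_of_le (hu i).1 (by exact_mod_cast hv.1 i),
    lt_of_le_of_lt (by exact_mod_cast hv.2 i) (hw i).2⟩

/-- The rectangle persistence module with underlying open rectangle `∏ᵢ (aᵢ, bᵢ)`. -/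
def RectMod (k : Type) [Field k] {n : ℕ} (a b : Fin n → EReal) : PersMod k n :=
  IntervalMod k (box a b) (box_ordConnected a b)

/-- Subtraction of extended reals with the conventions `(±∞) − (±∞) = 0`. -/
def esub (x y : EReal) : EReal :=
  if (x = ⊤ ∧ y = ⊤) ∨ (x = ⊥ ∧ y = ⊥) then 0 else x - y

/-- Absolute value on the extended reals (`|±∞| = +∞`). -/
def eabs (x : EReal) : EReal := max x (-x)

/-- The `ℓ^∞`-distance `‖x − y‖_∞` on extended `ℝⁿ`. -/
def supDist {n : ℕ} (x y : Fin n → EReal) : EReal := ⨆ i, eabs (esub (x i) (y i))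

/-- The closed formula for the interleaving distance between the rectangle modules with
rectangles `∏ (aᵢ, bᵢ)` and `∏ (cᵢ, dᵢ)`. -/
def dIFormula {n : ℕ} (a b c d : Fin n → EReal) : EReal :=
  min (max (⨅ i, esub (b i) (a i) / 2) (⨅ i, esub (d i) (c i) / 2))
      (max (supDist c a) (supDist d b))

/-- `M` and `N` are isomorphic persistence modules. -/
def PersIso (M N : PersMod k n) : Prop :=
  ∃ f : PersHom M N, ∀ u, Function.Bijective (f.app u)

/-- `M` is a non-zero persistence module. -/
def PersMod.Nonzero (M : PersMod k n) : Prop := ∃ (u : Pt n) (x : M.obj u), x ≠ 0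

/-- Direct sum of two persistence modules. -/
def dirSum (M N : PersMod k n) : PersMod k n where
  obj u := M.obj u × N.obj u
  map h := (M.map h).prodMap (N.map h)
  map_id u := by
    apply LinearMap.ext; intro x
    show ((M.map (le_refl u)) x.1, (N.map (le_refl u)) x.2) = x
    rw [M.map_id, N.map_id]; rfl
  map_comp h1 h2 := by
    apply LinearMap.ext; intro x
    show ((M.map _) ((M.map _) x.1), (N.map _) ((N.map _) x.2))
      = ((M.map _) x.1, (N.map _) x.2)
    have hM : (M.map h2) ((M.map h1) x.1) = (M.map (h1.trans h2)) x.1 := by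
      rw [← M.map_comp h1 h2]; rfl
    have hN : (N.map h2) ((N.map h1) x.2) = (N.map (h1.trans h2)) x.2 := by
      rw [← N.map_comp h1 h2]; rfl
    rw [hM, hN]

/-- Zigzag-connectedness of a subset of `ℝⁿ`. -/
def ZigzagConnected {n : ℕ} (I : Set (Pt n)) : Prop :=
  ∀ u ∈ I, ∀ v ∈ I,
    Relation.ReflTransGen (fun x y => x ∈ I ∧ y ∈ I ∧ (x ≤ y ∨ y ≤ x)) u v

/-- `I` is an interval in `ℝⁿ`: nonempty, order-convex and zigzag-connected. -/
def IsInterval {n : ℕ} (I : Set (Pt n)) : Prop :=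
  I.Nonempty ∧ I.OrdConnected ∧ ZigzagConnected I

/-- A partial multibijection `Fin m ⇸ Fin k'`, encoded by an `Option`-valued map that is
injective on matched indices. -/
def PartialInj {m k' : ℕ} (σ : Fin m → Option (Fin k')) : Prop :=
  ∀ i j l, σ i = some l → σ j = some l → i = j

/-- `σ` is an `ε`-matching between the barcodes `A` and `B` (families of intervals). -/
def IsEpsMatching (k : Type) [Field k] {n m k' : ℕ}
    (A : Fin m → Set (Pt n)) (hA : ∀ i, (A i).OrdConnected)
    (B : Fin k' → Set (Pt n)) (hB : ∀ j, (B j).OrdConnected)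
    (σ : Fin m → Option (Fin k')) (ε : ℝ) : Prop :=
  PartialInj σ ∧
  (∀ i, σ i = none → EpsTrivial (IntervalMod k (A i) (hA i)) (2 * ε)) ∧
  (∀ j, (∀ i, σ i ≠ some j) → EpsTrivial (IntervalMod k (B j) (hB j)) (2 * ε)) ∧
  (∀ i j, σ i = some j →
    Interleaved (IntervalMod k (A i) (hA i)) (IntervalMod k (B j) (hB j)) ε)

/-- The bottleneck distance between the interval decomposable modules with barcodes
`A` and `B`. -/
def bottleneckDist (k : Type) [Field k] {n m k' : ℕ}
    (A : Fin m → Set (Pt n)) (hA : ∀ i, (A i).OrdConnected)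
    (B : Fin k' → Set (Pt n)) (hB : ∀ j, (B j).OrdConnected) : EReal :=
  sInf {x : EReal | ∃ (ε : ℝ) (σ : Fin m → Option (Fin k')),
    0 ≤ ε ∧ IsEpsMatching k A hA B hB σ ε ∧ x = (ε : EReal)}


/-! ### Auxiliary lemmas -/

lemma EReal.sub_nonneg' {A B : EReal} (hA : A ≠ ⊤) (hB : B ≠ ⊥) (h : A < B) :
    0 ≤ B - A := by
  induction A
  · rw [EReal.sub_bot hB]; exact le_top
  · induction B
    · exact absurd rfl hB
    · rw [← EReal.coe_sub]
      norm_cast at h ⊢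
      linarith
    · rw [EReal.top_sub_coe]; exact le_top
  · exact absurd rfl hA

lemma EReal.lt_sub' {A B : EReal} {x y : ℝ} (hA : A ≠ ⊤) (hB : B ≠ ⊥)
    (h1 : A < (x : EReal)) (h2 : (y : EReal) < B) :
    ((y - x : ℝ) : EReal) < B - A := by
  induction A
  · rw [EReal.sub_bot hB]; exact EReal.coe_lt_top _
  · induction B
    · exact absurd rfl hB
    · rw [← EReal.coe_sub]
      norm_cast at h1 h2 ⊢
      linarith
    · rw [EReal.top_sub_coe]; exact EReal.coe_lt_top _
  · exact absurd rfl hA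

lemma EReal.half_le' {X : EReal} (hX0 : 0 ≤ X) {ε : ℝ} (h : X / 2 ≤ (ε : EReal)) :
    X ≤ ((2 * ε : ℝ) : EReal) := by
  have h2 : ((2 : ℝ) : EReal) = (2 : EReal) := by norm_cast
  induction X
  · simp at hX0
  · next t =>
      have ht : ((t : EReal)) / 2 = ((t / 2 : ℝ) : EReal) := by
        rw [EReal.coe_div, h2]
      rw [ht] at h
      norm_cast at h ⊢
      linarith
  · rw [EReal.top_div_of_pos_ne_top (by norm_num) (h2 ▸ EReal.coe_ne_top 2)] at h
    exact absurd h (by simp)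

lemma iInf_fin2 (f : Fin 2 → EReal) : (⨅ i, f i) = min (f 0) (f 1) := by
  apply le_antisymm
  · exact le_min (iInf_le _ 0) (iInf_le _ 1)
  · apply le_iInf; intro i
    fin_cases i
    · exact min_le_left _ _
    · exact min_le_right _ _

lemma rectMap_eq_zero {a b : Fin n → EReal} {u v : Pt n} (h : u ≤ v)
    (hno : ¬ (u ∈ box a b ∧ v ∈ box a b)) : (RectMod k a b).map h = 0 := by
  apply LinearMap.ext; intro x
  apply Subtype.ext
  show (if v ∈ box a b then x.1 else 0) = ((0 : segSpace k (box a b) v) : k)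
  by_cases hv : v ∈ box a b
  · by_cases hu : u ∈ box a b
    · exact absurd ⟨hu, hv⟩ hno
    · simp [hv, x.2 hu]
  · simp [hv]

lemma not_both_mem {a b : Fin 2 → EReal} {ε : ℝ} (i : Fin 2)
    (hai : a i ≠ ⊤) (hbi : b i ≠ ⊥)
    (hle : esub (b i) (a i) ≤ ((2 * ε : ℝ) : EReal)) (u : Pt 2) :
    ¬ (u ∈ box a b ∧ shiftPt (shiftPt u ε) ε ∈ box a b) := by
  rintro ⟨h1, h2⟩
  have ha : a i < ((u i : ℝ) : EReal) := (h1 i).1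
  have hbig : ((u i + ε + ε : ℝ) : EReal) < b i := (h2 i).2
  have hlt := EReal.lt_sub' hai hbi ha hbig
  have heq : u i + ε + ε - u i = 2 * ε := by ring
  rw [heq] at hlt
  have hesub : esub (b i) (a i) = b i - a i := by
    rw [esub, if_neg]
    rintro (⟨h', h''⟩ | ⟨h', h''⟩)
    · exact hai h''
    · exact hbi h'
  rw [hesub] at hle
  exact absurd hle (not_le.mpr hlt)

lemma rect_interleaved {a b c d : Fin 2 → EReal} {ε : ℝ} (hε : 0 ≤ ε)
    (hab : ∀ u : Pt 2, ¬ (u ∈ box a b ∧ shiftPt (shiftPt u ε) ε ∈ box a b))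
    (hcd : ∀ u : Pt 2, ¬ (u ∈ box c d ∧ shiftPt (shiftPt u ε) ε ∈ box c d)) :
    Interleaved (RectMod k a b) (RectMod k c d) ε := by
  refine ⟨hε, ⟨fun u => 0, ?_⟩, ⟨fun u => 0, ?_⟩, ?_, ?_⟩
  · intro u v h; simp
  · intro u v h; simp
  · intro u
    rw [rectMap_eq_zero _ (hab u)]
    exact LinearMap.ext fun _ => rfl
  · intro u
    rw [rectMap_eq_zero _ (hcd u)]
    exact LinearMap.ext fun _ => rfl

theorem interleavingDist_le_max_min_halves (a b c d : Fin 2 → EReal)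
    (ha : ∀ i, a i ≠ ⊤) (hb : ∀ i, b i ≠ ⊥)
    (hc : ∀ i, c i ≠ ⊤) (hd : ∀ i, d i ≠ ⊥) (hab : ∀ i, a i < b i) (hcd : ∀ i, c i < d i) :
    interleavingDist (RectMod k a b) (RectMod k c d) ≤
      max (⨅ i, esub (b i) (a i) / 2) (⨅ i, esub (d i) (c i) / 2) := by
  by_cases htop : max (⨅ i, esub (b i) (a i) / 2) (⨅ i, esub (d i) (c i) / 2) = ⊤
  · rw [htop]; exact le_top
  · set R : EReal := max (⨅ i, esub (b i) (a i) / 2) (⨅ i, esub (d i) (c i) / 2) with hR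
    have hesub_ab : ∀ i, 0 ≤ esub (b i) (a i) := by
      intro i
      have : esub (b i) (a i) = b i - a i := by
        rw [esub, if_neg]
        rintro (⟨h', h''⟩ | ⟨h', h''⟩)
        · exact ha i h''
        · exact hb i h'
      rw [this]
      exact EReal.sub_nonneg' (ha i) (hb i) (hab i)
    have hesub_cd : ∀ i, 0 ≤ esub (d i) (c i) := by
      intro i
      have : esub (d i) (c i) = d i - c i := by
        rw [esub, if_neg]
        rintro (⟨h', h''⟩ | ⟨h', h''⟩)
        · exact hc i h''
        · exact hd i h'
      rw [this]
      exact EReal.sub_nonneg' (hc i) (hd i) (hcd i)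
    have hR0 : (0 : EReal) ≤ R := by
      refine le_trans ?_ (le_max_left _ _)
      exact le_iInf fun i => EReal.div_nonneg (hesub_ab i) (by norm_num)
    have hRbot : R ≠ ⊥ := fun h => by simp [h] at hR0
    set ε : ℝ := R.toReal with hεdef
    have hεcoe : ((ε : ℝ) : EReal) = R := EReal.coe_toReal htop hRbot
    have hε : 0 ≤ ε := by
      have := hR0.trans_eq hεcoe.symm
      exact_mod_cast this
    have key : ∀ (p q : Fin 2 → EReal), (∀ i, p i ≠ ⊤) → (∀ i, q i ≠ ⊥) →
        (∀ i, 0 ≤ esub (q i) (p i)) →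
        (⨅ i, esub (q i) (p i) / 2) ≤ R →
        ∀ u : Pt 2, ¬ (u ∈ box p q ∧ shiftPt (shiftPt u ε) ε ∈ box p q) := by
      intro p q hp hq hpq hinf
      rw [iInf_fin2] at hinf
      rw [← hεcoe] at hinf
      rcases min_le_iff.mp hinf with h' | h'
      · exact fun u => not_both_mem 0 (hp 0) (hq 0) (EReal.half_le' (hpq 0) h') u
      · exact fun u => not_both_mem 1 (hp 1) (hq 1) (EReal.half_le' (hpq 1) h') u
    have hInter : Interleaved (RectMod k a b) (RectMod k c d) ε :=
      rect_interleaved hε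
        (key a b ha hb hesub_ab (le_max_left _ _))
        (key c d hc hd hesub_cd (le_max_right _ _))
    calc interleavingDist (RectMod k a b) (RectMod k c d) ≤ ((ε : ℝ) : EReal) :=
          sInf_le ⟨ε, hInter, rfl⟩
      _ = R := hεcoe

end
end

section
/- If M and N are rectangle persistence modules with rectangles (a₁,b₁)×(a₂,b₂) and (c₁,d₁)×(c₂,d₂) that are ε-interleaved via morphisms f: M → N(ε) and g: N → M(ε), and both f and g are non-trivial (nonzero), then ε ≥ max{ ‖c−a‖_∞ , ‖d−b‖_∞ }. -/
open Classical

noncomputable section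

variable {k : Type} [Field k] {n : ℕ}

section AuxProof

variable {k : Type} [Field k] {n : ℕ}

lemma seg_eq_zero' {I : Set (Pt n)} {u : Pt n} (hu : u ∉ I) (x : segSpace k I u) : x = 0 :=
  Subtype.ext (x.2 hu)

/-- The underlying scalar of an element of `segSpace`. -/
def valOf {I : Set (Pt n)} {u : Pt n} (x : segSpace k I u) : k := x

lemma rect_app_src_mem {a b c d : Fin n → EReal} {ε : ℝ}
    {f : PersHom (RectMod k a b) ((RectMod k c d).shift ε)} {u : Pt n}
    (hfu : f.app u ≠ 0) : u ∈ box a b := by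
  by_contra hu
  exact hfu (LinearMap.ext fun x => by have hx : x = 0 := seg_eq_zero' hu x; rw [hx]; simp)

lemma rect_app_tgt_mem {a b c d : Fin n → EReal} {ε : ℝ}
    {f : PersHom (RectMod k a b) ((RectMod k c d).shift ε)} {u : Pt n}
    (hfu : f.app u ≠ 0) : shiftPt u ε ∈ box c d := by
  by_contra hv
  exact hfu (LinearMap.ext fun x => seg_eq_zero' hv (f.app u x))

lemma exists_app_ne_zero {a b c d : Fin n → EReal} {ε : ℝ}
    {f : PersHom (RectMod k a b) ((RectMod k c d).shift ε)} {u : Pt n}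
    (hfu : f.app u ≠ 0) : ∃ x, f.app u x ≠ 0 := by
  by_contra h; push_neg at h; exact hfu (LinearMap.ext h)

lemma up_false {a b c d : Fin n → EReal} {ε : ℝ}
    {f : PersHom (RectMod k a b) ((RectMod k c d).shift ε)} {u v : Pt n}
    (hfu : f.app u ≠ 0) (huv : u ≤ v) (hv : v ∉ box a b)
    (hv' : shiftPt v ε ∈ box c d) : False := by
  obtain ⟨x, hx⟩ := exists_app_ne_zero hfu
  have hnat := LinearMap.congr_fun (f.natural huv) x
  simp only [LinearMap.comp_apply] at hnat
  have hMx : (RectMod k a b).map huv x = 0 := by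
    apply Subtype.ext
    show (if v ∈ box a b then valOf x else 0) = 0
    simp [hv]
  rw [hMx, map_zero] at hnat
  have h2 := congrArg Subtype.val hnat.symm
  have h3 : (if shiftPt v ε ∈ box c d then valOf (f.app u x) else 0) = (0 : k) := h2
  rw [if_pos hv'] at h3
  apply hx
  apply Subtype.ext
  exact h3

lemma down_false {a b c d : Fin n → EReal} {ε : ℝ}
    {f : PersHom (RectMod k a b) ((RectMod k c d).shift ε)} {u w : Pt n}
    (hfu : f.app u ≠ 0) (hwu : w ≤ u) (hw : w ∈ box a b)
    (hw' : shiftPt w ε ∉ box c d) : False := by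
  have hu : u ∈ box a b := rect_app_src_mem hfu
  have honew : w ∉ box a b → (1 : k) = 0 := fun h => absurd hw h
  have honeu : u ∉ box a b → (1 : k) = 0 := fun h => absurd hu h
  let onew : (RectMod k a b).obj w := ⟨1, honew⟩
  let oneu : (RectMod k a b).obj u := ⟨1, honeu⟩
  have hmap : (RectMod k a b).map hwu onew = oneu := by
    apply Subtype.ext
    show (if u ∈ box a b then (1 : k) else 0) = 1
    simp [hu]
  have h1 : f.app u oneu ≠ 0 := by
    obtain ⟨x, hx⟩ := exists_app_ne_zero hfu
    intro h0
    apply hx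
    have hxsm : x = valOf x • oneu := by
      apply Subtype.ext
      show valOf x = valOf x * 1
      rw [mul_one]
    rw [hxsm, map_smul, h0, smul_zero]
  have hz : f.app w onew = 0 := seg_eq_zero' hw' _
  have hnat := LinearMap.congr_fun (f.natural hwu) onew
  simp only [LinearMap.comp_apply] at hnat
  rw [hmap, hz, map_zero] at hnat
  exact h1 hnat

lemma exists_real_of_ne {x : EReal} (h1 : x ≠ ⊥) (h2 : x ≠ ⊤) : ∃ r : ℝ, x = (r : EReal) :=
  ⟨x.toReal, (EReal.coe_toReal h2 h1).symm⟩

lemma lt_coe_sub_of_add_lt {x : EReal} {C ε : ℝ} (hx : x ≠ ⊤)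
    (h : x + (ε : EReal) < (C : EReal)) : x < ((C - ε : ℝ) : EReal) := by
  induction x using EReal.rec with
  | bot => exact EReal.bot_lt_coe _
  | coe A =>
      rw [← EReal.coe_add] at h
      have : A + ε < C := EReal.coe_lt_coe_iff.1 h
      exact_mod_cast (by linarith : A < C - ε)
  | top => exact absurd rfl hx

lemma coord_le {a b c d : Fin n → EReal} {ε : ℝ}
    (f : PersHom (RectMod k a b) ((RectMod k c d).shift ε))
    (hf : ¬ f.Trivial) (i : Fin n) :
    c i ≤ a i + (ε : EReal) ∧ d i ≤ b i + (ε : EReal) := by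
  obtain ⟨u, hfu⟩ : ∃ u, f.app u ≠ 0 := by
    by_contra h; push_neg at h; exact hf h
  have hu : u ∈ box a b := rect_app_src_mem hfu
  have hv : shiftPt u ε ∈ box c d := rect_app_tgt_mem hfu
  constructor
  · by_contra hlt
    push_neg at hlt
    have hcbot : c i ≠ ⊥ := (bot_le.trans_lt hlt).ne'
    have hcne : c i ≠ ⊤ := (hv i).1.ne_top
    obtain ⟨C, hC⟩ := exists_real_of_ne hcbot hcne
    have hane : a i ≠ ⊤ := (hu i).1.ne_top
    rw [hC] at hlt
    have haC : a i < ((C - ε : ℝ) : EReal) := lt_coe_sub_of_add_lt hane hlt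
    set W : ℝ := min (u i) (C - ε) with hW
    set w : Pt n := Function.update u i W with hw
    have hwu : w ≤ u := by
      intro j
      by_cases hj : j = i
      · subst hj; simp only [hw, Function.update_self]; exact min_le_left _ _
      · simp [hw, Function.update_of_ne hj]
    have hwbox : w ∈ box a b := by
      intro j
      by_cases hj : j = i
      · subst hj
        constructor
        · simp only [hw, Function.update_self]
          have : ((W : ℝ) : EReal) = min ((u j : ℝ) : EReal) ((C - ε : ℝ) : EReal) := by
            exact_mod_cast rfl
          rw [this]
          exact lt_min (hu j).1 haC
        · simp only [hw, Function.update_self]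
          refine lt_of_le_of_lt ?_ (hu j).2
          exact_mod_cast min_le_left (u j) (C - ε)
      · simpa [hw, Function.update_of_ne hj] using hu j
    have hnot : shiftPt w ε ∉ box c d := by
      intro hmem
      have h1 := (hmem i).1
      rw [hC] at h1
      have h2 : shiftPt w ε i = W + ε := by simp [shiftPt, hw, Function.update_self]
      rw [h2] at h1
      have h3 : C < W + ε := EReal.coe_lt_coe_iff.1 h1
      have h4 : W ≤ C - ε := min_le_right _ _
      linarith
    exact down_false hfu hwu hwbox hnot
  · by_contra hlt
    push_neg at hlt
    have hbbot : b i ≠ ⊥ := ((EReal.bot_lt_coe _).trans (hu i).2).ne'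
    have hbne : b i ≠ ⊤ := by
      intro h
      rw [h, EReal.top_add_coe] at hlt
      exact not_top_lt hlt
    obtain ⟨B, hB⟩ := exists_real_of_ne hbbot hbne
    have huB : u i ≤ B := by
      have := (hu i).2
      rw [hB] at this
      exact (EReal.coe_lt_coe_iff.1 this).le
    set v : Pt n := Function.update u i B with hv'
    have huv : u ≤ v := by
      intro j
      by_cases hj : j = i
      · subst hj; simp only [hv', Function.update_self]; exact huB
      · simp [hv', Function.update_of_ne hj]
    have hvnot : v ∉ box a b := by
      intro hm
      have := (hm i).2
      rw [hB] at this
      simp only [hv', Function.update_self] at this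
      exact lt_irrefl _ this
    have hvmem : shiftPt v ε ∈ box c d := by
      intro j
      by_cases hj : j = i
      · subst hj
        have h2 : shiftPt v ε j = B + ε := by simp [shiftPt, hv', Function.update_self]
        rw [h2]
        constructor
        · refine (hv j).1.trans_le ?_
          have : shiftPt u ε j = u j + ε := rfl
          rw [this]
          exact_mod_cast add_le_add_left huB ε
        · rw [hB, ← EReal.coe_add] at hlt
          exact hlt
      · have h2 : shiftPt v ε j = u j + ε := by simp [shiftPt, hv', Function.update_of_ne hj]
        rw [h2]
        exact hv j
    exact up_false hfu huv hvnot hvmem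

lemma eabs_esub_le_of {x y : EReal} {ε : ℝ} (hε : 0 ≤ ε)
    (h1 : x ≤ y + (ε : EReal)) (h2 : y ≤ x + (ε : EReal)) :
    eabs (esub x y) ≤ (ε : EReal) := by
  induction x using EReal.rec with
  | bot =>
      induction y using EReal.rec with
      | bot =>
          have : esub ⊥ ⊥ = 0 := by simp [esub]
          rw [this]
          have : eabs 0 = 0 := by simp [eabs]
          rw [this]
          exact_mod_cast hε
      | coe r =>
          rw [EReal.bot_add] at h2
          exact absurd h2 (by simp)
      | top =>
          rw [EReal.bot_add] at h2
          exact absurd h2 (by simp)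
  | coe X =>
      induction y using EReal.rec with
      | bot =>
          rw [EReal.bot_add] at h1
          exact absurd h1 (by simp)
      | coe Y =>
          have he : esub (X : EReal) (Y : EReal) = ((X - Y : ℝ) : EReal) := by
            simp [esub, EReal.coe_sub]
          rw [he, eabs]
          rw [← EReal.coe_add] at h1 h2
          have hh1 : X ≤ Y + ε := EReal.coe_le_coe_iff.1 h1
          have hh2 : Y ≤ X + ε := EReal.coe_le_coe_iff.1 h2
          apply max_le
          · exact_mod_cast (by linarith : X - Y ≤ ε)
          · rw [← EReal.coe_neg]
            exact_mod_cast (by linarith : -(X - Y) ≤ ε)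
      | top =>
          rw [← EReal.coe_add] at h2
          exact absurd (top_le_iff.1 h2) (EReal.coe_ne_top _)
  | top =>
      induction y using EReal.rec with
      | bot =>
          rw [EReal.bot_add] at h1
          exact absurd h1 (by simp)
      | coe r =>
          rw [← EReal.coe_add] at h1
          exact absurd (top_le_iff.1 h1) (EReal.coe_ne_top _)
      | top =>
          have : esub ⊤ ⊤ = 0 := by simp [esub]
          rw [this]
          have : eabs 0 = 0 := by simp [eabs]
          rw [this]
          exact_mod_cast hε

end AuxProof

theorem eps_ge_of_nontrivial_interleaving (a b c d : Fin 2 → EReal)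
    (ha : ∀ i, a i ≠ ⊤) (hb : ∀ i, b i ≠ ⊥)
    (hc : ∀ i, c i ≠ ⊤) (hd : ∀ i, d i ≠ ⊥) (hab : ∀ i, a i < b i) (hcd : ∀ i, c i < d i)
    (ε : ℝ) (hε : 0 ≤ ε)
    (f : PersHom (RectMod k a b) ((RectMod k c d).shift ε))
    (g : PersHom (RectMod k c d) ((RectMod k a b).shift ε))
    (hfg : IsInterleavingPair (RectMod k a b) (RectMod k c d) ε hε f g)
    (hf : ¬ f.Trivial) (hg : ¬ g.Trivial) :
    max (supDist c a) (supDist d b) ≤ (ε : EReal) := by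
  have hF := fun i => coord_le f hf i
  have hG := fun i => coord_le g hg i
  apply max_le
  · simp only [supDist]
    apply iSup_le
    intro i
    exact eabs_esub_le_of hε (hF i).1 (hG i).1
  · simp only [supDist]
    apply iSup_le
    intro i
    exact eabs_esub_le_of hε (hF i).2 (hG i).2

end
end

section
/- Let M and N be 2-parameter rectangle persistence modules with underlying open rectangles (a₁,b₁)×(a₂,b₂) and (c₁,d₁)×(c₂,d₂). Then the interleaving distance is given exactly by d_I(M,N) = min{ max{ min_i (b_i−a_i)/2 , min_i (d_i−c_i)/2 } , max{ ‖c−a‖_∞ , ‖d−b‖_∞ } }. -/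
open Classical

noncomputable section

variable {k : Type} [Field k] {n : ℕ}

/-! ### Auxiliary lemmas for the main theorem -/

section Aux

lemma eabs_nonneg' (x : EReal) : 0 ≤ eabs x := by
  unfold eabs
  induction x using EReal.rec
  · simp
  · rename_i r
    rcases le_total 0 r with h | h
    · exact le_max_of_le_left (by exact_mod_cast h)
    · refine le_max_of_le_right ?_
      rw [← EReal.coe_neg]
      exact_mod_cast neg_nonneg.2 h
  · simp

lemma esub_nonneg' {x y : EReal} (h : y < x) : 0 ≤ esub x y := by
  unfold esub
  split_ifs with hh
  · exact le_refl _
  · induction x using EReal.rec <;> induction y using EReal.rec <;>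
      simp_all [← EReal.coe_sub]
    exact h.le

lemma eabs_esub_le' {x y : EReal} {s : ℝ} (hs : 0 ≤ s) :
    eabs (esub x y) ≤ (s : EReal) ↔ x ≤ y + (s:EReal) ∧ y ≤ x + (s:EReal) := by
  unfold eabs esub
  induction x using EReal.rec <;> induction y using EReal.rec <;>
    simp_all [← EReal.coe_add, ← EReal.coe_neg, ← EReal.coe_sub]
  constructor
  · rintro ⟨h1, h2⟩; constructor <;> linarith
  · rintro ⟨h1, h2⟩; constructor <;> linarith

lemma width_iff' {a b : EReal} (ha : a ≠ ⊤) (hb : b ≠ ⊥) (r : ℝ) :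
    ((r:EReal) < esub b a) ↔ ∃ x : ℝ, a < (x:EReal) ∧ (((x + r : ℝ)):EReal) < b := by
  unfold esub
  induction a using EReal.rec <;> induction b using EReal.rec <;>
    simp_all [← EReal.coe_sub, ← EReal.coe_add]
  · rename_i b
    exact ⟨b - r - 1, by linarith⟩
  · rename_i a b
    constructor
    · intro h
      exact ⟨(a + (b - r))/2, by constructor <;> linarith⟩
    · rintro ⟨x, h1, h2⟩; linarith
  · rename_i a
    exact ⟨a + 1, by linarith⟩

lemma lt_coe_sub' {a : EReal} {c ε : ℝ} (h : a + (ε:EReal) < (c:EReal)) :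
    a < ((c - ε : ℝ) : EReal) := by
  induction a using EReal.rec with
  | bot => exact EReal.bot_lt_coe _
  | coe a => norm_cast at h ⊢; linarith
  | top => rw [EReal.top_add_coe] at h; exact absurd h (by simp)

lemma ecancel {x y : EReal} {ε : ℝ} (h : x + (ε:EReal) < y + (ε:EReal)) : x < y := by
  by_contra hc
  push_neg at hc
  exact absurd (add_le_add_left hc ((ε:EReal))) (not_le.2 h)

lemma two_mul_coe (t : ℝ) : (2 : EReal) * (t : EReal) = ((t + t : ℝ) : EReal) := by
  rw [show ((t + t : ℝ) : EReal) = ((2 * t : ℝ) : EReal) by norm_num [two_mul]]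
  norm_cast

lemma ediv2_lt_iff {x : EReal} {t : ℝ} :
    ((t:EReal) < x / 2) ↔ (((t + t : ℝ) : EReal) < x) := by
  rw [← not_le, ← not_le,
    EReal.div_le_iff_le_mul (by norm_num) (by norm_cast),
    two_mul_coe]

lemma ediv2_le_iff {x : EReal} {t : ℝ} :
    (x / 2 ≤ (t:EReal)) ↔ (x ≤ ((t + t : ℝ) : EReal)) := by
  rw [EReal.div_le_iff_le_mul (by norm_num) (by norm_cast),
    two_mul_coe]

end Aux

section Aux2

lemma shiftPt_coe {n : ℕ} (u : Pt n) (ε : ℝ) (i : Fin n) :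
    ((shiftPt u ε i : ℝ) : EReal) = (u i : EReal) + (ε : EReal) := by
  show (((u i + ε : ℝ)) : EReal) = _
  push_cast
  rfl

lemma mem_of_ne_zero' {I : Set (Pt n)} {u : Pt n} {x : segSpace k I u} (h : x ≠ 0) : u ∈ I := by
  by_contra hu
  exact h (Subtype.ext (x.2 hu))

lemma rect_shift_map_val {a b : Fin n → EReal} {ε : ℝ} {u v : Pt n} (h : u ≤ v)
    (x : ((RectMod k a b).shift ε).obj u) :
    ((((RectMod k a b).shift ε).map h) x).val = if shiftPt v ε ∈ box a b then x.val else 0 := rfl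

lemma rect_map_val {a b : Fin n → EReal} {u v : Pt n} (h : u ≤ v) (x : (RectMod k a b).obj u) :
    (((RectMod k a b).map h) x).val = if v ∈ box a b then x.val else 0 := rfl

lemma boxKey {a b c d : Fin n → EReal} {ε : ℝ}
    (h1 : ∀ i, c i ≤ a i + (ε:EReal)) (h4 : ∀ i, d i ≤ b i + (ε:EReal))
    {u v : Pt n} (huv : u ≤ v) (hu : u ∈ box a b) (hv : shiftPt v ε ∈ box c d) :
    v ∈ box a b ∧ shiftPt u ε ∈ box c d := by
  constructor <;> intro i
  · refine ⟨lt_of_lt_of_le (hu i).1 (by exact_mod_cast huv i), ?_⟩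
    have h2 := (hv i).2
    rw [shiftPt_coe] at h2
    exact ecancel (lt_of_lt_of_le h2 (h4 i))
  · rw [shiftPt_coe]
    constructor
    · exact lt_of_le_of_lt (h1 i) (EReal.add_lt_add_right_coe (hu i).1 ε)
    · have h2 := (hv i).2
      rw [shiftPt_coe] at h2
      exact lt_of_le_of_lt (add_le_add_left (by exact_mod_cast huv i) _) h2

lemma boxKeyComp {a b c d : Fin n → EReal} {ε : ℝ}
    (h1 : ∀ i, c i ≤ a i + (ε:EReal)) (h2 : ∀ i, b i ≤ d i + (ε:EReal))
    {u : Pt n} (hu : u ∈ box a b) (hu2 : shiftPt (shiftPt u ε) ε ∈ box a b) :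
    shiftPt u ε ∈ box c d := by
  intro i
  rw [shiftPt_coe]
  constructor
  · exact lt_of_le_of_lt (h1 i) (EReal.add_lt_add_right_coe (hu i).1 ε)
  · have h3 := (hu2 i).2
    rw [shiftPt_coe, shiftPt_coe] at h3
    exact ecancel (lt_of_lt_of_le h3 (h2 i))

/-- The "conditional identity" linear map between the spaces of interval modules. -/
def condMap (I J : Set (Pt n)) (u v : Pt n) : segSpace k I u →ₗ[k] segSpace k J v where
  toFun x := ⟨if v ∈ J then x.val else 0, fun h => by simp [h]⟩
  map_add' x y := by
    apply Subtype.ext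
    by_cases h : v ∈ J <;> simp [h]
  map_smul' m x := by
    apply Subtype.ext
    by_cases h : v ∈ J <;> simp [h]

lemma condMap_val (I J : Set (Pt n)) (u v : Pt n) (x : segSpace k I u) :
    (condMap (k := k) I J u v x).val = if v ∈ J then x.val else 0 := rfl

/-- The canonical morphism into the shifted rectangle module. -/
def rectHom (a b c d : Fin n → EReal) (ε : ℝ)
    (h1 : ∀ i, c i ≤ a i + (ε:EReal)) (h4 : ∀ i, d i ≤ b i + (ε:EReal)) :
    PersHom (RectMod k a b) ((RectMod k c d).shift ε) where
  app u := condMap (box a b) (box c d) u (shiftPt u ε)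
  natural := by
    intro u v huv
    apply LinearMap.ext; intro x
    apply Subtype.ext
    show (if shiftPt v ε ∈ box c d then (((RectMod k a b).map huv) x).val else 0)
        = (if shiftPt v ε ∈ box c d
            then (if shiftPt u ε ∈ box c d then x.val else 0) else 0)
    by_cases hv : shiftPt v ε ∈ box c d
    · rw [if_pos hv, if_pos hv, rect_map_val]
      by_cases hu : u ∈ box a b
      · obtain ⟨hvA, huC⟩ := boxKey h1 h4 huv hu hv
        rw [if_pos hvA, if_pos huC]
      · rw [x.2 hu]
        split_ifs <;> rfl
    · rw [if_neg hv, if_neg hv]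

end Aux2

section Aux3

lemma interleaved_of_close (a b c d : Fin n → EReal) (ε : ℝ) (hε : 0 ≤ ε)
    (h1 : ∀ i, c i ≤ a i + (ε:EReal)) (h2 : ∀ i, b i ≤ d i + (ε:EReal))
    (h3 : ∀ i, a i ≤ c i + (ε:EReal)) (h4 : ∀ i, d i ≤ b i + (ε:EReal)) :
    Interleaved (RectMod k a b) (RectMod k c d) ε := by
  refine ⟨hε, rectHom a b c d ε h1 h4, rectHom c d a b ε h3 h2, ?_, ?_⟩
  · intro u
    apply LinearMap.ext; intro x
    apply Subtype.ext
    show (if shiftPt (shiftPt u ε) ε ∈ box a b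
            then (if shiftPt u ε ∈ box c d then x.val else 0) else 0)
        = (if shiftPt (shiftPt u ε) ε ∈ box a b then x.val else 0)
    by_cases hA2 : shiftPt (shiftPt u ε) ε ∈ box a b
    · rw [if_pos hA2, if_pos hA2]
      by_cases hu : u ∈ box a b
      · rw [if_pos (boxKeyComp h1 h2 hu hA2)]
      · rw [x.2 hu]
        split_ifs <;> rfl
    · rw [if_neg hA2, if_neg hA2]
  · intro u
    apply LinearMap.ext; intro x
    apply Subtype.ext
    show (if shiftPt (shiftPt u ε) ε ∈ box c d
            then (if shiftPt u ε ∈ box a b then x.val else 0) else 0)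
        = (if shiftPt (shiftPt u ε) ε ∈ box c d then x.val else 0)
    by_cases hC2 : shiftPt (shiftPt u ε) ε ∈ box c d
    · rw [if_pos hC2, if_pos hC2]
      by_cases hu : u ∈ box c d
      · rw [if_pos (boxKeyComp h3 h4 hu hC2)]
      · rw [x.2 hu]
        split_ifs <;> rfl
    · rw [if_neg hC2, if_neg hC2]

/-- The zero morphism of persistence modules. -/
def zeroPersHom (M N : PersMod k n) : PersHom M N where
  app _ := 0
  natural := by intro u v h; simp

lemma interleaved_of_trivial (a b c d : Fin n → EReal) (t : ℝ) (ht : 0 ≤ t)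
    (hA : ∃ i, ∀ x : ℝ, ¬(a i < (x:EReal) ∧ (((x + (t + t) : ℝ)):EReal) < b i))
    (hC : ∃ i, ∀ x : ℝ, ¬(c i < (x:EReal) ∧ (((x + (t + t) : ℝ)):EReal) < d i)) :
    Interleaved (RectMod k a b) (RectMod k c d) t := by
  refine ⟨ht, zeroPersHom _ _, zeroPersHom _ _, ?_, ?_⟩ <;> intro u <;>
    (apply LinearMap.ext; intro x; apply Subtype.ext)
  · show (0:k) = if shiftPt (shiftPt u t) t ∈ box a b then x.val else 0
    split_ifs with h2
    · by_cases hu : u ∈ box a b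
      · obtain ⟨i, hi⟩ := hA
        exfalso
        refine hi (u i) ⟨(hu i).1, ?_⟩
        have h3 := (h2 i).2
        rw [show u i + (t + t) = shiftPt (shiftPt u t) t i by show _ = u i + t + t; ring]
        exact h3
      · exact (x.2 hu).symm
    · rfl
  · show (0:k) = if shiftPt (shiftPt u t) t ∈ box c d then x.val else 0
    split_ifs with h2
    · by_cases hu : u ∈ box c d
      · obtain ⟨i, hi⟩ := hC
        exfalso
        refine hi (u i) ⟨(hu i).1, ?_⟩
        have h3 := (h2 i).2
        rw [show u i + (t + t) = shiftPt (shiftPt u t) t i by show _ = u i + t + t; ring]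
        exact h3
      · exact (x.2 hu).symm
    · rfl

end Aux3

section Aux4

lemma strip_all {a b : Fin n → EReal} {ε : ℝ} (hε : 0 ≤ ε) {u : Pt n}
    (h : ∀ j, a j < ((u j : ℝ) : EReal) ∧ (((u j + (ε + ε) : ℝ)) : EReal) < b j) :
    u ∈ box a b ∧ shiftPt (shiftPt u ε) ε ∈ box a b := by
  constructor <;> intro j
  · exact ⟨(h j).1,
      lt_of_le_of_lt (by exact_mod_cast (by linarith : u j ≤ u j + (ε + ε))) (h j).2⟩
  · have hco : shiftPt (shiftPt u ε) ε j = u j + (ε + ε) := by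
      show u j + ε + ε = _; ring
    rw [hco]
    exact ⟨lt_of_lt_of_le (h j).1 (by exact_mod_cast (by linarith : u j ≤ u j + (ε + ε))),
      (h j).2⟩

lemma lower_master {a b c d : Fin n → EReal} {ε : ℝ} (hε : 0 ≤ ε)
    (ha : ∀ i, a i ≠ ⊤) (hb : ∀ i, b i ≠ ⊥)
    (hc : ∀ i, c i ≠ ⊤) (hd : ∀ i, d i ≠ ⊥)
    (hstrip : ∀ i, ∃ x : ℝ, a i < (x:EReal) ∧ (((x + (ε + ε) : ℝ)):EReal) < b i)
    (f : PersHom (RectMod k a b) ((RectMod k c d).shift ε))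
    (g : PersHom (RectMod k c d) ((RectMod k a b).shift ε))
    (hp : IsInterleavingPair (RectMod k a b) (RectMod k c d) ε hε f g) :
    ∀ i, c i ≤ a i + (ε:EReal) ∧ b i ≤ d i + (ε:EReal) ∧
      a i ≤ c i + (ε:EReal) ∧ d i ≤ b i + (ε:EReal) := by
  have stepA : ∀ (u : Pt n), shiftPt (shiftPt u ε) ε ∈ box a b →
      ∀ x : (RectMod k a b).obj u, x.val ≠ 0 →
      shiftPt u ε ∈ box c d ∧ f.app u x ≠ 0 ∧
        (g.app (shiftPt u ε)) (f.app u x) ≠ 0 := by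
    intro u hu2 x hx
    have h1 := LinearMap.congr_fun (hp.1 u) x
    have hzval : ((g.app (shiftPt u ε)) ((f.app u) x)).val
        = if shiftPt (shiftPt u ε) ε ∈ box a b then x.val else 0 :=
      congrArg Subtype.val h1
    rw [if_pos hu2] at hzval
    have hgz : (g.app (shiftPt u ε)) ((f.app u) x) ≠ 0 := by
      intro h0
      rw [h0] at hzval
      exact hx (hzval.symm.trans rfl)
    have hfz : f.app u x ≠ 0 := by
      intro h0
      rw [h0] at hgz
      exact hgz (map_zero _)
    exact ⟨mem_of_ne_zero' hfz, hfz, hgz⟩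
  choose xs hxs1 hxs2 using hstrip
  obtain ⟨hu0, hu02⟩ := strip_all hε (u := xs) (fun j => ⟨hxs1 j, hxs2 j⟩)
  set x₀ : (RectMod k a b).obj xs := ⟨1, fun h => absurd hu0 h⟩ with hx₀def
  have hx₀v : x₀.val ≠ 0 := one_ne_zero
  obtain ⟨huC0, hf0, hg0⟩ := stepA xs hu02 x₀ hx₀v
  intro i
  refine ⟨?_, ?_, ?_, ?_⟩
  -- Claim 1 : c i ≤ a i + ε
  · by_contra hC1
    push_neg at hC1
    obtain ⟨ci, hci⟩ : ∃ ci : ℝ, c i = (ci : EReal) :=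
      ⟨(c i).toReal, (EReal.coe_toReal (hc i) (ne_bot_of_gt hC1)).symm⟩
    rw [hci] at hC1
    have hxiA : a i < ((min (xs i) (ci - ε) : ℝ) : EReal) := by
      rcases min_cases (xs i) (ci - ε) with ⟨he, _⟩ | ⟨he, _⟩ <;> rw [he]
      · exact hxs1 i
      · exact lt_coe_sub' hC1
    have hxib : (((min (xs i) (ci - ε) + (ε + ε) : ℝ)) : EReal) < b i := by
      refine lt_of_le_of_lt ?_ (hxs2 i)
      exact_mod_cast add_le_add_left (min_le_left _ _) (ε + ε)
    set u : Pt n := Function.update xs i (min (xs i) (ci - ε)) with hudef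
    have hmem : ∀ j, a j < ((u j : ℝ) : EReal) ∧ (((u j + (ε + ε) : ℝ)) : EReal) < b j := by
      intro j
      rcases eq_or_ne j i with rfl | hj
      · rw [hudef]
        simp only [Function.update_self]
        exact ⟨hxiA, hxib⟩
      · rw [hudef]
        simp only [Function.update_of_ne hj]
        exact ⟨hxs1 j, hxs2 j⟩
    obtain ⟨huA, hu2A⟩ := strip_all hε hmem
    obtain ⟨huC, -, -⟩ := stepA u hu2A ⟨1, fun h => absurd huA h⟩ one_ne_zero
    have hlt := (huC i).1
    rw [shiftPt_coe, hci] at hlt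
    have hui : u i = min (xs i) (ci - ε) := by rw [hudef]; simp
    rw [hui] at hlt
    refine lt_irrefl ((ci : ℝ) : EReal) (lt_of_lt_of_le hlt ?_)
    rw [← EReal.coe_add]
    exact_mod_cast (by
      have := min_le_right (xs i) (ci - ε); linarith : min (xs i) (ci - ε) + ε ≤ ci)
  -- Claim 2 : b i ≤ d i + ε
  · by_contra hC2
    push_neg at hC2
    have hdiT : d i ≠ ⊤ := by
      intro h; rw [h, EReal.top_add_coe] at hC2; exact not_top_lt hC2
    obtain ⟨di, hdi⟩ : ∃ di : ℝ, d i = (di : EReal) :=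
      ⟨(d i).toReal, (EReal.coe_toReal hdiT (hd i)).symm⟩
    rw [hdi] at hC2
    have hxiA : a i < ((max (xs i) (di - ε) : ℝ) : EReal) :=
      lt_of_lt_of_le (hxs1 i) (by exact_mod_cast le_max_left _ _)
    have hxib : (((max (xs i) (di - ε) + (ε + ε) : ℝ)) : EReal) < b i := by
      rcases max_cases (xs i) (di - ε) with ⟨he, _⟩ | ⟨he, _⟩ <;> rw [he]
      · exact hxs2 i
      · rw [show di - ε + (ε + ε) = di + ε by ring, EReal.coe_add]
        exact hC2
    set u : Pt n := Function.update xs i (max (xs i) (di - ε)) with hudef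
    have hmem : ∀ j, a j < ((u j : ℝ) : EReal) ∧ (((u j + (ε + ε) : ℝ)) : EReal) < b j := by
      intro j
      rcases eq_or_ne j i with rfl | hj
      · rw [hudef]
        simp only [Function.update_self]
        exact ⟨hxiA, hxib⟩
      · rw [hudef]
        simp only [Function.update_of_ne hj]
        exact ⟨hxs1 j, hxs2 j⟩
    obtain ⟨huA, hu2A⟩ := strip_all hε hmem
    obtain ⟨huC, -, -⟩ := stepA u hu2A ⟨1, fun h => absurd huA h⟩ one_ne_zero
    have hlt := (huC i).2
    rw [shiftPt_coe, hdi] at hlt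
    have hui : u i = max (xs i) (di - ε) := by rw [hudef]; simp
    rw [hui] at hlt
    refine lt_irrefl ((di : ℝ) : EReal) (lt_of_le_of_lt ?_ hlt)
    rw [← EReal.coe_add]
    exact_mod_cast (by
      have := le_max_right (xs i) (di - ε); linarith : di ≤ max (xs i) (di - ε) + ε)
  -- Claim 3 : a i ≤ c i + ε
  · by_contra hC3
    push_neg at hC3
    obtain ⟨ai, hai⟩ : ∃ ai : ℝ, a i = (ai : EReal) :=
      ⟨(a i).toReal, (EReal.coe_toReal (ha i) (ne_bot_of_gt hC3)).symm⟩
    rw [hai] at hC3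
    have haxs : ai < xs i := by
      have := hxs1 i; rw [hai] at this; exact_mod_cast this
    set w : Pt n := Function.update (shiftPt xs ε) i (ai - ε) with hwdef
    have hwv : w ≤ shiftPt xs ε := by
      intro j
      rcases eq_or_ne j i with rfl | hj
      · rw [hwdef]
        simp only [Function.update_self]
        show ai - ε ≤ xs j + ε
        linarith
      · rw [hwdef]; simp only [Function.update_of_ne hj]; exact le_refl _
    have hwC : w ∈ box c d := by
      intro j
      rcases eq_or_ne j i with rfl | hj
      · rw [hwdef]
        simp only [Function.update_self]
        constructor
        · exact lt_coe_sub' hC3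
        · have h2 := (huC0 j).2
          rw [shiftPt_coe] at h2
          refine lt_of_le_of_lt ?_ h2
          rw [← EReal.coe_add]
          exact_mod_cast (by linarith : ai - ε ≤ xs j + ε)
      · rw [hwdef]
        simp only [Function.update_of_ne hj]
        exact huC0 j
    have hwsA : shiftPt w ε ∉ box a b := by
      intro hmem
      have hlt := (hmem i).1
      rw [shiftPt_coe, hai] at hlt
      have hwi : w i = ai - ε := by rw [hwdef]; simp
      rw [hwi, ← EReal.coe_add] at hlt
      have : ai < ai - ε + ε := by exact_mod_cast hlt
      linarith
    set zw : (RectMod k c d).obj w := ⟨1, fun h => absurd hwC h⟩ with hzwdef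
    have hnat := LinearMap.congr_fun (g.natural hwv) zw
    rw [LinearMap.comp_apply, LinearMap.comp_apply] at hnat
    have hmapz : ((RectMod k c d).map hwv) zw = ⟨1, fun h => absurd huC0 h⟩ := by
      apply Subtype.ext
      show (if shiftPt xs ε ∈ box c d then (1:k) else 0) = 1
      rw [if_pos huC0]
    have hgw : (((RectMod k a b).shift ε).map hwv) ((g.app w) zw) = 0 := by
      have hz : (g.app w) zw = 0 := Subtype.ext ((g.app w zw).2 hwsA)
      rw [hz, map_zero]
    rw [hmapz, hgw] at hnat
    have hy0 : (f.app xs) x₀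
        = ((f.app xs) x₀).val • (⟨1, fun h => absurd huC0 h⟩ : (RectMod k c d).obj (shiftPt xs ε)) := by
      apply Subtype.ext
      show ((f.app xs) x₀).val = ((f.app xs) x₀).val • (1:k)
      rw [smul_eq_mul, mul_one]
    have key := (g.app (shiftPt xs ε)).map_smul (((f.app xs) x₀).val)
      (⟨1, fun h => absurd huC0 h⟩ : (RectMod k c d).obj (shiftPt xs ε))
    rw [hy0] at hg0
    exact hg0 (key.trans (by rw [hnat, smul_zero]))
  -- Claim 4 : d i ≤ b i + ε
  · by_contra hC4
    push_neg at hC4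
    have hbiT : b i ≠ ⊤ := by
      intro h; rw [h, EReal.top_add_coe] at hC4; exact not_top_lt hC4
    obtain ⟨bi, hbi⟩ : ∃ bi : ℝ, b i = (bi : EReal) :=
      ⟨(b i).toReal, (EReal.coe_toReal hbiT (hb i)).symm⟩
    have hxsbi : xs i + (ε + ε) < bi := by
      have := hxs2 i; rw [hbi] at this; exact_mod_cast this
    set w : Pt n := Function.update xs i bi with hwdef
    have huw : xs ≤ w := by
      intro j
      rcases eq_or_ne j i with rfl | hj
      · rw [hwdef]; simp only [Function.update_self]
        linarith
      · rw [hwdef]; simp only [Function.update_of_ne hj]; exact le_refl _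
    have hwA : w ∉ box a b := by
      intro hmem
      have hlt := (hmem i).2
      have hwi : w i = bi := by rw [hwdef]; simp
      rw [hwi, hbi] at hlt
      exact lt_irrefl _ hlt
    have hwC : shiftPt w ε ∈ box c d := by
      intro j
      rcases eq_or_ne j i with rfl | hj
      · have hwi : w j = bi := by rw [hwdef]; simp
        rw [shiftPt_coe, hwi]
        constructor
        · have h2 := (huC0 j).1
          rw [shiftPt_coe] at h2
          refine lt_of_lt_of_le h2 ?_
          rw [← EReal.coe_add, ← EReal.coe_add]
          exact_mod_cast (by linarith : xs j + ε ≤ bi + ε)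
        · rw [← hbi]; exact hC4
      · have hco : shiftPt w ε j = shiftPt xs ε j := by
          show w j + ε = xs j + ε
          rw [hwdef]; simp only [Function.update_of_ne hj]
        rw [hco]
        exact huC0 j
    have hnat := LinearMap.congr_fun (f.natural huw) x₀
    rw [LinearMap.comp_apply, LinearMap.comp_apply] at hnat
    have hmapx : ((RectMod k a b).map huw) x₀ = 0 := by
      apply Subtype.ext
      show (if w ∈ box a b then (1:k) else 0) = 0
      rw [if_neg hwA]
    rw [hmapx, map_zero] at hnat
    have hval := congrArg Subtype.val hnat.symm
    rw [rect_shift_map_val, if_pos hwC] at hval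
    exact hf0 (Subtype.ext hval)

end Aux4
lemma fin2_exists_le {f : Fin 2 → EReal} {t : EReal} (h : (⨅ i, f i) ≤ t) : ∃ i, f i ≤ t := by
  have hmin : min (f 0) (f 1) ≤ ⨅ i, f i :=
    le_iInf fun i => by fin_cases i <;> [exact min_le_left _ _; exact min_le_right _ _]
  rcases min_le_iff.1 (le_trans hmin h) with h | h
  exacts [⟨0, h⟩, ⟨1, h⟩]

theorem interleavingDist_rectMod (a b c d : Fin 2 → EReal)
    (ha : ∀ i, a i ≠ ⊤) (hb : ∀ i, b i ≠ ⊥)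
    (hc : ∀ i, c i ≠ ⊤) (hd : ∀ i, d i ≠ ⊥) (hab : ∀ i, a i < b i) (hcd : ∀ i, c i < d i) :
    interleavingDist (RectMod k a b) (RectMod k c d) = dIFormula a b c d := by
  set T : EReal := max (⨅ i, esub (b i) (a i) / 2) (⨅ i, esub (d i) (c i) / 2) with hT
  set S : EReal := max (supDist c a) (supDist d b) with hS
  have hbot0 : (⊥ : EReal) < 0 := by norm_num
  have hT0 : (0:EReal) ≤ T := by
    refine le_trans ?_ (le_max_left _ _)
    exact le_iInf fun i => EReal.div_nonneg (esub_nonneg' (hab i)) (by norm_num)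
  have hS0 : (0:EReal) ≤ S :=
    le_trans (le_trans (eabs_nonneg' _) (le_iSup (fun i => eabs (esub (c i) (a i))) 0))
      (le_max_left _ _)
  have hformula : dIFormula a b c d = min T S := rfl
  rw [hformula, interleavingDist]
  apply le_antisymm
  · -- upper bound
    rcases le_total T S with hTS | hTS
    · rw [min_eq_left hTS]
      by_cases hTtop : T = ⊤
      · rw [hTtop]; exact le_top
      · have hTt : T = ((T.toReal : ℝ) : EReal) :=
          (EReal.coe_toReal hTtop (lt_of_lt_of_le hbot0 hT0).ne').symm
        have ht0 : (0:ℝ) ≤ T.toReal := by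
          have := hT0; rw [hTt] at this; exact_mod_cast this
        refine sInf_le ⟨T.toReal, ?_, hTt⟩
        refine interleaved_of_trivial a b c d _ ht0 ?_ ?_
        · have h1 : (⨅ i, esub (b i) (a i) / 2) ≤ ((T.toReal : ℝ):EReal) :=
            hTt ▸ le_max_left _ _
          obtain ⟨i, hi⟩ := fin2_exists_le h1
          refine ⟨i, fun x hx => ?_⟩
          have h2 : ((T.toReal + T.toReal : ℝ):EReal) < esub (b i) (a i) :=
            (width_iff' (ha i) (hb i) _).2 ⟨x, hx.1, hx.2⟩
          rw [← ediv2_lt_iff] at h2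
          exact absurd hi (not_le.2 h2)
        · have h1 : (⨅ i, esub (d i) (c i) / 2) ≤ ((T.toReal : ℝ):EReal) :=
            hTt ▸ le_max_right _ _
          obtain ⟨i, hi⟩ := fin2_exists_le h1
          refine ⟨i, fun x hx => ?_⟩
          have h2 : ((T.toReal + T.toReal : ℝ):EReal) < esub (d i) (c i) :=
            (width_iff' (hc i) (hd i) _).2 ⟨x, hx.1, hx.2⟩
          rw [← ediv2_lt_iff] at h2
          exact absurd hi (not_le.2 h2)
    · rw [min_eq_right hTS]
      by_cases hStop : S = ⊤
      · rw [hStop]; exact le_top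
      · have hSt : S = ((S.toReal : ℝ) : EReal) :=
          (EReal.coe_toReal hStop (lt_of_lt_of_le hbot0 hS0).ne').symm
        have hs0 : (0:ℝ) ≤ S.toReal := by
          have := hS0; rw [hSt] at this; exact_mod_cast this
        have hsupca : supDist c a ≤ ((S.toReal:ℝ):EReal) := by
          rw [← hSt, hS]; exact le_max_left _ _
        have hsupdb : supDist d b ≤ ((S.toReal:ℝ):EReal) := by
          rw [← hSt, hS]; exact le_max_right _ _
        have hca : ∀ i, c i ≤ a i + ((S.toReal:ℝ):EReal) ∧ a i ≤ c i + ((S.toReal:ℝ):EReal) :=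
          fun i => (eabs_esub_le' hs0).1
            (le_trans (le_iSup (fun j => eabs (esub (c j) (a j))) i) hsupca)
        have hdb : ∀ i, d i ≤ b i + ((S.toReal:ℝ):EReal) ∧ b i ≤ d i + ((S.toReal:ℝ):EReal) :=
          fun i => (eabs_esub_le' hs0).1
            (le_trans (le_iSup (fun j => eabs (esub (d j) (b j))) i) hsupdb)
        refine sInf_le ⟨S.toReal, ?_, hSt⟩
        exact interleaved_of_close a b c d _ hs0 (fun i => (hca i).1) (fun i => (hdb i).2)
          (fun i => (hca i).2) (fun i => (hdb i).1)
  · -- lower bound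
    refine le_sInf ?_
    rintro x ⟨ε, hI, rfl⟩
    obtain ⟨hε, f, g, hp⟩ := hI
    rcases le_or_gt T ((ε:ℝ):EReal) with h | h
    · exact le_trans (min_le_left _ _) h
    · refine le_trans (min_le_right _ _) ?_
      rw [hT] at h
      rcases lt_max_iff.1 h with hM | hN
      · have hstrip : ∀ i, ∃ x:ℝ, a i < (x:EReal) ∧ (((x + (ε+ε)):ℝ):EReal) < b i := by
          intro i
          have h2 := lt_of_lt_of_le hM (iInf_le _ i)
          rw [ediv2_lt_iff] at h2
          exact (width_iff' (ha i) (hb i) _).1 h2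
        have hcl := lower_master hε ha hb hc hd hstrip f g hp
        refine max_le (iSup_le fun i => ?_) (iSup_le fun i => ?_)
        · exact (eabs_esub_le' hε).2 ⟨(hcl i).1, (hcl i).2.2.1⟩
        · exact (eabs_esub_le' hε).2 ⟨(hcl i).2.2.2, (hcl i).2.1⟩
      · have hstrip : ∀ i, ∃ x:ℝ, c i < (x:EReal) ∧ (((x + (ε+ε)):ℝ):EReal) < d i := by
          intro i
          have h2 := lt_of_lt_of_le hN (iInf_le _ i)
          rw [ediv2_lt_iff] at h2
          exact (width_iff' (hc i) (hd i) _).1 h2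
        have hp' : IsInterleavingPair (RectMod k c d) (RectMod k a b) ε hε g f :=
          ⟨hp.2, hp.1⟩
        have hcl := lower_master hε hc hd ha hb hstrip g f hp'
        refine max_le (iSup_le fun i => ?_) (iSup_le fun i => ?_)
        · exact (eabs_esub_le' hε).2 ⟨(hcl i).2.2.1, (hcl i).1⟩
        · exact (eabs_esub_le' hε).2 ⟨(hcl i).2.1, (hcl i).2.2.2⟩

end
end
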